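/- If {M_n} is a sequence of non-negative real numbers such that the series of M_n^{-1/n} diverges, and {K_n} is a sequence of non-negative real numbers satisfying K_n ≤ a·M_n + b^n for constants a, b > 0, then the series of K_n^{-1/n} also diverges. -/

import Mathlib

open Real Filter

private lemma aux_rpow (n : ℕ) {u v : ℝ} (hu : 0 < u) (hv : 0 < v) (h : u ≤ 2 * v) :
    v ^ (-(1 : ℝ) / (n + 1)) ≤ 2 * u ^ (-(1 : ℝ) / (n + 1)) := by
  set e : ℝ := -(1 : ℝ) / (n + 1) with he
  have hx : (0 : ℝ) < (n : ℝ) + 1 := by positivity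
  have he0 : e ≤ 0 := by
    rw [he]; apply div_nonpos_of_nonpos_of_nonneg <;> [norm_num; linarith]
  have he1 : -1 ≤ e := by
    rw [he, neg_div, neg_le_neg_iff]
    rw [div_le_one hx]; linarith
  have h1 : (2 * v) ^ e ≤ u ^ e := Real.rpow_le_rpow_of_nonpos hu h he0
  rw [Real.mul_rpow (by norm_num) hv.le] at h1
  have h2pos : (0 : ℝ) < (2 : ℝ) ^ e := Real.rpow_pos_of_pos (by norm_num) _
  have h2 : v ^ e ≤ ((2:ℝ) ^ e)⁻¹ * u ^ e := by
    rw [le_inv_mul_iff₀ h2pos]; linarith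
  have h3 : ((2:ℝ) ^ e)⁻¹ ≤ 2 := by
    rw [← Real.rpow_neg (by norm_num)]
    calc (2:ℝ) ^ (-e) ≤ (2:ℝ) ^ (1:ℝ) :=
          Real.rpow_le_rpow_of_exponent_le one_le_two (by linarith)
      _ = 2 := Real.rpow_one 2
  have hupos : 0 < u ^ e := Real.rpow_pos_of_pos hu _
  calc v ^ e ≤ ((2:ℝ) ^ e)⁻¹ * u ^ e := h2
    _ ≤ 2 * u ^ e := by
        apply mul_le_mul_of_nonneg_right h3 hupos.le

/-- If `∑ M_n^{-1/n}` diverges and `K_n ≤ a·M_n + b^n` with `a, b > 0`,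
then `∑ K_n^{-1/n}` also diverges. (Series indexed from 1.) -/
theorem stmt_0 (M K : ℕ → ℝ) (a b : ℝ) (ha : 0 < a) (hb : 0 < b)
    (hM : ∀ n, 0 < M n) (hK : ∀ n, 0 < K n)
    (hKM : ∀ n, K n ≤ a * M n + b ^ n)
    (hdiv : ¬ Summable (fun n : ℕ => (M (n + 1)) ^ (-(1 : ℝ) / (n + 1)))) :
    ¬ Summable (fun n : ℕ => (K (n + 1)) ^ (-(1 : ℝ) / (n + 1))) := by
  intro hs
  apply hdiv
  set f : ℕ → ℝ := fun n => (K (n + 1)) ^ (-(1 : ℝ) / (n + 1)) with hf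
  set g : ℕ → ℝ := fun n => (M (n + 1)) ^ (-(1 : ℝ) / (n + 1)) with hg
  set C : ℝ := 2 * max a 1 with hC
  have htend : Tendsto f atTop (nhds 0) := hs.tendsto_atTop_zero
  have hcb : (0 : ℝ) < (1/2) * b⁻¹ := by positivity
  obtain ⟨N, hN⟩ := (Filter.eventually_atTop).1 (htend.eventually_lt_const hcb)
  have key : ∀ n ≥ N, g n ≤ C * f n := by
    intro n hn
    have hfn := hN n hn
    set e : ℝ := -(1 : ℝ) / (n + 1) with he
    have hx : (0 : ℝ) < (n : ℝ) + 1 := by positivity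
    have he0 : e ≤ 0 := by
      rw [he]; apply div_nonpos_of_nonpos_of_nonneg <;> [norm_num; linarith]
    have he1 : -1 ≤ e := by
      rw [he, neg_div, neg_le_neg_iff, div_le_one hx]; linarith
    by_cases hcase : a * M (n + 1) ≤ b ^ (n + 1)
    · -- then K ≤ 2 b^{n+1}, contradict f n < (1/2) b⁻¹
      exfalso
      have hK2 : K (n + 1) ≤ 2 * b ^ (n + 1) := (hKM (n + 1)).trans (by linarith)
      have hbp : (0 : ℝ) < b ^ (n + 1) := by positivity
      have h1 : (2 * b ^ (n + 1)) ^ e ≤ f n :=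
        Real.rpow_le_rpow_of_nonpos (hK (n + 1)) hK2 he0
      have h2 : (2 * b ^ (n + 1) : ℝ) ^ e = (2:ℝ) ^ e * b⁻¹ := by
        rw [Real.mul_rpow (by norm_num) hbp.le, ← Real.rpow_natCast b (n + 1),
          ← Real.rpow_mul hb.le]
        congr 1
        have : ((n + 1 : ℕ) : ℝ) * e = -1 := by
          rw [he]; push_cast; field_simp
        rw [this, Real.rpow_neg_one]
      have h3 : (1/2 : ℝ) ≤ (2:ℝ) ^ e := by
        calc (1/2 : ℝ) = (2:ℝ) ^ (-1 : ℝ) := by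
              rw [Real.rpow_neg_one]; norm_num
          _ ≤ (2:ℝ) ^ e := Real.rpow_le_rpow_of_exponent_le one_le_two he1
      have : (1/2) * b⁻¹ ≤ f n := by
        calc (1/2) * b⁻¹ ≤ (2:ℝ) ^ e * b⁻¹ := by
              apply mul_le_mul_of_nonneg_right h3 (by positivity)
          _ = (2 * b ^ (n + 1) : ℝ) ^ e := h2.symm
          _ ≤ f n := h1
      linarith
    · push_neg at hcase
      have hK2 : K (n + 1) ≤ 2 * (a * M (n + 1)) := by
        have := hKM (n + 1); linarith
      have haM : 0 < a * M (n + 1) := mul_pos ha (hM _)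
      have h1 : (a * M (n + 1)) ^ e ≤ 2 * f n := aux_rpow n (hK (n + 1)) haM hK2
      have h2 : g n = (a⁻¹) ^ e * (a * M (n + 1)) ^ e := by
        rw [hg, ← Real.mul_rpow (by positivity) haM.le]
        field_simp
        rw [he, neg_div]
      have h3 : (a⁻¹ : ℝ) ^ e ≤ max a 1 := by
        rw [← Real.rpow_neg_one a, ← Real.rpow_mul ha.le]
        rcases le_total a 1 with h | h
        · calc a ^ (-1 * e) ≤ 1 := Real.rpow_le_one ha.le h (by linarith)
            _ ≤ max a 1 := le_max_right _ _
        · calc a ^ (-1 * e) ≤ a ^ (1:ℝ) :=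
              Real.rpow_le_rpow_of_exponent_le h (by linarith)
            _ = a := Real.rpow_one a
            _ ≤ max a 1 := le_max_left _ _
      have hpos : (0:ℝ) ≤ (a * M (n + 1)) ^ e := (Real.rpow_pos_of_pos haM _).le
      have hfpos : 0 < f n := Real.rpow_pos_of_pos (hK (n + 1)) _
      calc g n = (a⁻¹) ^ e * (a * M (n + 1)) ^ e := h2
        _ ≤ max a 1 * (a * M (n + 1)) ^ e := mul_le_mul_of_nonneg_right h3 hpos
        _ ≤ max a 1 * (2 * f n) := by
            apply mul_le_mul_of_nonneg_left h1 (le_trans zero_le_one (le_max_right a 1))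
        _ = C * f n := by rw [hC]; ring
  have hsumC : Summable (fun n => C * f (n + N)) :=
    ((summable_nat_add_iff N).2 hs).mul_left C
  have hshift : Summable (fun n => g (n + N)) := by
    apply Summable.of_nonneg_of_le (fun n => ?_) (fun n => key (n + N) le_add_self) hsumC
    exact (Real.rpow_pos_of_pos (hM _) _).le
  exact (summable_nat_add_iff N).1 hshift
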